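/- Let v : ℝ → ℝ be continuously differentiable on [0,1] with v(0) = v(1) = 0. Then ∫₀¹ v(x)² dx ≤ (1/π²) ∫₀¹ (v'(x))² dx. -/

import Mathlib

open Real Set intervalIntegral MeasureTheory Filter

noncomputable def Faux (v : ℝ → ℝ) (x : ℝ) : ℝ :=
  Real.pi * v x ^ 2 * Real.cos (Real.pi*x) / Real.sin (Real.pi*x)

lemma sin_pos' {x : ℝ} (hx : x ∈ Set.Ioo (0:ℝ) 1) : 0 < Real.sin (Real.pi * x) :=
  Real.sin_pos_of_pos_of_lt_pi (mul_pos Real.pi_pos hx.1)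
    (by nlinarith [Real.pi_pos, hx.2])

lemma hasDerivAt_F (v : ℝ → ℝ) (d : ℝ) {x : ℝ} (hx : x ∈ Set.Ioo (0:ℝ) 1)
    (hvx : HasDerivAt v d x) :
    HasDerivAt (Faux v)
      (Real.pi * (2 * v x * d * (Real.cos (Real.pi*x) / Real.sin (Real.pi*x))
        - Real.pi * v x ^2 / Real.sin (Real.pi*x)^2)) x := by
  have hs0 := (sin_pos' hx).ne'
  have hlin : HasDerivAt (fun y : ℝ => Real.pi * y) Real.pi x := by
    simpa using (hasDerivAt_id x).const_mul Real.pi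
  have hs : HasDerivAt (fun y => Real.sin (Real.pi*y)) (Real.cos (Real.pi*x) * Real.pi) x :=
    (Real.hasDerivAt_sin (Real.pi*x)).comp x hlin
  have hc : HasDerivAt (fun y => Real.cos (Real.pi*y)) (-Real.sin (Real.pi*x) * Real.pi) x :=
    (Real.hasDerivAt_cos (Real.pi*x)).comp x hlin
  have hv2 : HasDerivAt (fun y => Real.pi * v y ^ 2) (Real.pi * (2 * v x * d)) x := by
    simpa [mul_comm, mul_assoc] using ((hvx.pow 2).const_mul Real.pi)
  have hN : HasDerivAt (fun y => Real.pi * v y ^ 2 * Real.cos (Real.pi*y))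
      (Real.pi * (2 * v x * d) * Real.cos (Real.pi*x) + Real.pi * v x ^ 2 * (-Real.sin (Real.pi*x) * Real.pi)) x :=
    hv2.mul hc
  have := hN.div hs hs0
  convert this using 1
  case e'_4 => rfl
  case e'_5 => rfl
  case e'_8 => rfl
  have hpc : Real.sin (Real.pi*x)^2 + Real.cos (Real.pi*x)^2 = 1 := Real.sin_sq_add_cos_sq _
  rw [eq_div_iff (pow_ne_zero 2 hs0)]
  field_simp
  linear_combination (Real.pi * v x^2) * hpc


lemma ptwise (p s c d V : ℝ) (hs : s ≠ 0) (hpc : s^2 + c^2 = 1) :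
    d^2 - p^2*V^2 - p*(2*V*d*(c/s) - p*V^2/s^2) = (d - p*V*(c/s))^2 := by
  field_simp
  linear_combination (-(p^2*V^2))*hpc

lemma key_ineq (v : ℝ → ℝ)
    (hd : ∀ x ∈ Set.Ioo (0:ℝ) 1, HasDerivAt v (deriv v x) x)
    (hdc : ContinuousOn (deriv v) (Set.Ioo 0 1))
    {ε : ℝ} (hε : ε ∈ Set.Ioo (0:ℝ) (1/2)) :
    Real.pi^2 * ∫ x in ε..(1-ε), v x ^ 2 ≤
      (∫ x in ε..(1-ε), (deriv v x) ^ 2) + (Faux v ε - Faux v (1-ε)) := by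
  have hab : ε ≤ 1 - ε := by linarith [hε.2]
  have hsub : Set.uIcc ε (1-ε) ⊆ Set.Ioo 0 1 := by
    rw [Set.uIcc_of_le hab]
    intro x hx
    exact ⟨lt_of_lt_of_le hε.1 hx.1, by linarith [hx.2, hε.1]⟩
  set φ : ℝ → ℝ := fun x => Real.pi * (2 * v x * deriv v x * (Real.cos (Real.pi*x) / Real.sin (Real.pi*x))
        - Real.pi * v x ^2 / Real.sin (Real.pi*x)^2) with hφ
  have hvc : ContinuousOn v (Set.Ioo 0 1) := fun x hx => ((hd x hx).continuousAt).continuousWithinAt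
  have hsc : ContinuousOn (fun x => Real.sin (Real.pi * x)) (Set.Ioo (0:ℝ) 1) :=
    (Real.continuous_sin.comp (continuous_const.mul continuous_id)).continuousOn
  have hcc : ContinuousOn (fun x => Real.cos (Real.pi * x)) (Set.Ioo (0:ℝ) 1) :=
    (Real.continuous_cos.comp (continuous_const.mul continuous_id)).continuousOn
  have hsne : ∀ x ∈ Set.Ioo (0:ℝ) 1, Real.sin (Real.pi * x) ≠ 0 := fun x hx => (sin_pos' hx).ne'
  have hφc : ContinuousOn φ (Set.Ioo 0 1) := by
    apply ContinuousOn.mul continuousOn_const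
    apply ContinuousOn.sub
    · exact ((continuousOn_const.mul hvc).mul hdc).mul (hcc.div hsc hsne)
    · exact (continuousOn_const.mul (hvc.pow 2)).div (hsc.pow 2)
        (fun x hx => pow_ne_zero 2 (hsne x hx))
  have hφint : IntervalIntegrable φ volume ε (1-ε) :=
    (hφc.mono hsub).intervalIntegrable
  have hFTC : ∫ x in ε..(1-ε), φ x = Faux v (1-ε) - Faux v ε :=
    intervalIntegral.integral_eq_sub_of_hasDerivAt
      (fun x hx => hasDerivAt_F v (deriv v x) (hsub hx) (hd x (hsub hx))) hφint
  have hd2int : IntervalIntegrable (fun x => (deriv v x)^2) volume ε (1-ε) :=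
    ((hdc.pow 2).mono hsub).intervalIntegrable
  have hv2int : IntervalIntegrable (fun x => Real.pi^2 * v x ^2) volume ε (1-ε) :=
    ((continuousOn_const.mul ((hvc.pow 2))).mono hsub).intervalIntegrable
  have hnonneg : 0 ≤ ∫ x in ε..(1-ε), ((deriv v x)^2 - Real.pi^2 * v x^2 - φ x) := by
    rw [intervalIntegral.integral_congr (g := fun x =>
        (deriv v x - Real.pi * v x * (Real.cos (Real.pi*x) / Real.sin (Real.pi*x)))^2)
      (by
        intro x hx
        exact ptwise Real.pi (Real.sin (Real.pi*x)) (Real.cos (Real.pi*x)) (deriv v x) (v x)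
          (hsne x (hsub hx)) (Real.sin_sq_add_cos_sq _))]
    apply intervalIntegral.integral_nonneg hab
    intro x _
    positivity
  have hsplit : ∫ x in ε..(1-ε), ((deriv v x)^2 - Real.pi^2 * v x^2 - φ x)
      = (∫ x in ε..(1-ε), (deriv v x)^2) - (Real.pi^2 * ∫ x in ε..(1-ε), v x^2)
        - (Faux v (1-ε) - Faux v ε) := by
    rw [intervalIntegral.integral_sub (hd2int.sub hv2int) hφint,
        intervalIntegral.integral_sub hd2int hv2int, hFTC,
        intervalIntegral.integral_const_mul]
  linarith [hnonneg, hsplit.symm.le, hsplit.le]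

lemma tendsto_div_sin : Filter.Tendsto (fun t : ℝ => t / Real.sin t) (nhdsWithin 0 {(0:ℝ)}ᶜ) (nhds 1) := by
  have h := hasDerivAt_iff_tendsto_slope.mp (Real.hasDerivAt_sin 0)
  simp only [Real.cos_zero] at h
  have h2 := h.inv₀ one_ne_zero
  simp only [inv_one] at h2
  refine h2.congr (fun t => ?_)
  simp [slope_fun_def_field, inv_div]

lemma tendsto_sin_ratio : Filter.Tendsto (fun ε : ℝ => Real.pi * ε^2 / Real.sin (Real.pi * ε))
    (nhdsWithin 0 (Set.Ioi 0)) (nhds 0) := by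
  have hcomp : Filter.Tendsto (fun ε : ℝ => Real.pi * ε) (nhdsWithin 0 (Set.Ioi 0))
      (nhdsWithin 0 {(0:ℝ)}ᶜ) := by
    apply tendsto_nhdsWithin_of_tendsto_nhds_of_eventually_within
    · have : Filter.Tendsto (fun ε : ℝ => Real.pi * ε) (nhds 0) (nhds (Real.pi * 0)) :=
        (continuous_const.mul continuous_id).tendsto 0
      simpa using this.mono_left nhdsWithin_le_nhds
    · filter_upwards [self_mem_nhdsWithin] with ε hε
      exact (mul_pos Real.pi_pos hε).ne'
  have hid : Filter.Tendsto (fun ε:ℝ => ε) (nhdsWithin 0 (Set.Ioi 0)) (nhds 0) :=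
    tendsto_id.mono_left nhdsWithin_le_nhds
  have hmain := (tendsto_div_sin.comp hcomp).mul hid
  simp only [one_mul] at hmain
  refine hmain.congr (fun ε => ?_)
  simp only [Function.comp]
  ring

lemma tendsto_Faux_zero (v : ℝ → ℝ) (g0 : ℝ) (h0 : v 0 = 0)
    (hder : HasDerivWithinAt v g0 (Set.Icc 0 1) 0) :
    Filter.Tendsto (fun ε => Faux v ε) (nhdsWithin 0 (Set.Ioi 0)) (nhds 0) := by
  have hslope := hasDerivWithinAt_iff_tendsto_slope.mp hder
  have hle : nhdsWithin (0:ℝ) (Set.Ioi 0) ≤ nhdsWithin 0 (Set.Icc 0 1 \ {0}) := by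
    rw [← nhdsWithin_Ioc_eq_nhdsGT (zero_lt_one (α := ℝ))]
    exact nhdsWithin_mono _ (fun x hx => ⟨⟨le_of_lt hx.1, hx.2⟩, (ne_of_gt hx.1)⟩)
  have hsl : Filter.Tendsto (fun ε => v ε / ε) (nhdsWithin 0 (Set.Ioi 0)) (nhds g0) := by
    refine (hslope.mono_left hle).congr (fun ε => ?_)
    simp [slope_fun_def_field, h0]
  have hcos : Filter.Tendsto (fun ε : ℝ => Real.cos (Real.pi*ε)) (nhdsWithin 0 (Set.Ioi 0)) (nhds 1) := by
    have hc : Continuous fun ε : ℝ => Real.cos (Real.pi*ε) := by fun_prop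
    have := hc.tendsto 0
    simp only [mul_zero, Real.cos_zero] at this
    exact this.mono_left nhdsWithin_le_nhds
  have hprod := ((hsl.pow 2).mul hcos).mul tendsto_sin_ratio
  simp only [mul_one, mul_zero] at hprod
  refine hprod.congr' ?_
  filter_upwards [Ioo_mem_nhdsGT_of_mem (Set.left_mem_Ico.mpr one_pos)] with ε hε
  have hε0 : ε ≠ 0 := ne_of_gt hε.1
  have hs0 : Real.sin (Real.pi * ε) ≠ 0 := (sin_pos' hε).ne'
  unfold Faux
  field_simp

lemma tendsto_Faux_one (v : ℝ → ℝ) (g1 : ℝ) (h1 : v 1 = 0)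
    (hder : HasDerivWithinAt v g1 (Set.Icc 0 1) 1) :
    Filter.Tendsto (fun ε => Faux v (1-ε)) (nhdsWithin 0 (Set.Ioi 0)) (nhds 0) := by
  have hslope := hasDerivWithinAt_iff_tendsto_slope.mp hder
  have hmap : Filter.Tendsto (fun ε : ℝ => 1 - ε) (nhdsWithin 0 (Set.Ioi 0))
      (nhdsWithin 1 (Set.Icc 0 1 \ {1})) := by
    apply tendsto_nhdsWithin_of_tendsto_nhds_of_eventually_within
    · have : Filter.Tendsto (fun ε : ℝ => 1 - ε) (nhds 0) (nhds (1 - 0)) :=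
        (continuous_const.sub continuous_id).tendsto 0
      simpa using this.mono_left nhdsWithin_le_nhds
    · filter_upwards [Ioo_mem_nhdsGT_of_mem (Set.left_mem_Ico.mpr one_pos)] with ε hε
      exact ⟨⟨by linarith [hε.2], by linarith [hε.1]⟩, by simp; linarith [hε.1]⟩
  have hsl : Filter.Tendsto (fun ε => v (1-ε) / (-ε)) (nhdsWithin 0 (Set.Ioi 0)) (nhds g1) := by
    refine ((hslope.comp hmap)).congr (fun ε => ?_)
    simp only [Function.comp, slope_fun_def_field, h1]
    ring_nf
  have hcos : Filter.Tendsto (fun ε : ℝ => Real.cos (Real.pi*(1-ε))) (nhdsWithin 0 (Set.Ioi 0))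
      (nhds (Real.cos Real.pi)) := by
    have hc : Continuous fun ε : ℝ => Real.cos (Real.pi*(1-ε)) := by fun_prop
    have := hc.tendsto 0
    simpa using this.mono_left nhdsWithin_le_nhds
  have hprod := ((hsl.pow 2).mul hcos).mul tendsto_sin_ratio
  simp only [mul_zero] at hprod
  refine hprod.congr' ?_
  filter_upwards [Ioo_mem_nhdsGT_of_mem (Set.left_mem_Ico.mpr one_pos)] with ε hε
  have hε0 : ε ≠ 0 := ne_of_gt hε.1
  have h1ε : (1 - ε) ∈ Set.Ioo (0:ℝ) 1 := ⟨by linarith [hε.2], by linarith [hε.1]⟩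
  have hs0 : Real.sin (Real.pi * (1 - ε)) ≠ 0 := (sin_pos' h1ε).ne'
  have hsin_eq : Real.sin (Real.pi * (1 - ε)) = Real.sin (Real.pi * ε) := by
    rw [show Real.pi * (1 - ε) = Real.pi - Real.pi * ε by ring, Real.sin_pi_sub]
  unfold Faux
  rw [hsin_eq] at hs0 ⊢
  field_simp

lemma tendsto_trunc (f : ℝ → ℝ)
    (hf : MeasureTheory.IntegrableOn f (Set.Icc 0 1) MeasureTheory.volume) :
    Filter.Tendsto (fun ε => ∫ x in ε..(1-ε), f x) (nhdsWithin 0 (Set.Ioi 0))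
      (nhds (∫ x in (0:ℝ)..1, f x)) := by
  have huIcc : Set.uIcc (0:ℝ) 1 = Set.Icc 0 1 := Set.uIcc_of_le zero_le_one
  have hP : ContinuousOn (fun x => ∫ t in (0:ℝ)..x, f t) (Set.Icc 0 1) := by
    have := intervalIntegral.continuousOn_primitive_interval
      (a := (0:ℝ)) (b := 1) (μ := MeasureTheory.volume) (f := f) (by rwa [huIcc])
    rwa [huIcc] at this
  have hle : nhdsWithin (0:ℝ) (Set.Ioi 0) ≤ nhdsWithin 0 (Set.Icc 0 1) := by
    rw [← nhdsWithin_Ioc_eq_nhdsGT (zero_lt_one (α := ℝ))]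
    exact nhdsWithin_mono _ Set.Ioc_subset_Icc_self
  have hA : Filter.Tendsto (fun ε => ∫ t in (0:ℝ)..ε, f t) (nhdsWithin 0 (Set.Ioi 0)) (nhds 0) := by
    have h := (hP 0 ⟨le_refl 0, zero_le_one⟩).tendsto
    simp only [intervalIntegral.integral_same] at h
    exact h.mono_left hle
  have hB : Filter.Tendsto (fun ε => ∫ t in (0:ℝ)..(1-ε), f t) (nhdsWithin 0 (Set.Ioi 0))
      (nhds (∫ t in (0:ℝ)..1, f t)) := by
    have h1 := (hP 1 ⟨zero_le_one, le_refl 1⟩).tendsto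
    have hmap : Filter.Tendsto (fun ε : ℝ => 1 - ε) (nhdsWithin 0 (Set.Ioi 0))
        (nhdsWithin 1 (Set.Icc 0 1)) := by
      apply tendsto_nhdsWithin_of_tendsto_nhds_of_eventually_within
      · have hc : Continuous fun ε : ℝ => 1 - ε := by fun_prop
        have := hc.tendsto 0
        simpa using this.mono_left nhdsWithin_le_nhds
      · filter_upwards [Ioo_mem_nhdsGT_of_mem (Set.left_mem_Ico.mpr one_pos)] with ε hε
        exact ⟨by linarith [hε.2], by linarith [hε.1]⟩
    exact h1.comp hmap
  have hBA := hB.sub hA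
  rw [sub_zero] at hBA
  refine hBA.congr' ?_
  filter_upwards [Ioo_mem_nhdsGT_of_mem (Set.left_mem_Ico.mpr one_pos)] with ε hε
  have h01 : IntervalIntegrable f MeasureTheory.volume 0 ε := by
    apply MeasureTheory.IntegrableOn.intervalIntegrable
    apply hf.mono_set
    rw [Set.uIcc_of_le (le_of_lt hε.1)]
    exact Set.Icc_subset_Icc (le_refl 0) (le_of_lt hε.2)
  have h02 : IntervalIntegrable f MeasureTheory.volume ε (1-ε) := by
    apply MeasureTheory.IntegrableOn.intervalIntegrable
    apply hf.mono_set
    rw [← huIcc]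
    exact Set.uIcc_subset_uIcc (by rw [huIcc]; exact ⟨le_of_lt hε.1, le_of_lt hε.2⟩)
      (by rw [huIcc]; constructor <;> [linarith [hε.2]; linarith [hε.1]])
  rw [← intervalIntegral.integral_add_adjacent_intervals h01 h02]
  ring

theorem stmt_5 (v : ℝ → ℝ)
    (hv : ContDiffOn ℝ 1 v (Set.Icc (0:ℝ) 1))
    (h0 : v 0 = 0) (h1 : v 1 = 0) :
    (∫ x in (0:ℝ)..1, (v x) ^ 2) ≤ (1 / Real.pi ^ 2) * ∫ x in (0:ℝ)..1, (deriv v x) ^ 2 := by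
  set g := derivWithin v (Set.Icc (0:ℝ) 1) with hg
  have hπ2 : (0:ℝ) < Real.pi ^ 2 := by positivity
  have hd : ∀ x ∈ Set.Ioo (0:ℝ) 1, HasDerivAt v (deriv v x) x := by
    intro x hx
    have hmem : Set.Icc (0:ℝ) 1 ∈ nhds x := Icc_mem_nhds hx.1 hx.2
    exact ((hv.differentiableOn one_ne_zero x (Set.Ioo_subset_Icc_self hx)).differentiableAt
      hmem).hasDerivAt
  have hdeq : Set.EqOn (deriv v) g (Set.Ioo 0 1) := fun x hx =>
    (derivWithin_of_mem_nhds (Icc_mem_nhds hx.1 hx.2)).symm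
  have hgc : ContinuousOn g (Set.Icc 0 1) :=
    hv.continuousOn_derivWithin (uniqueDiffOn_Icc one_pos) le_rfl
  have hdc : ContinuousOn (deriv v) (Set.Ioo 0 1) :=
    (hgc.mono Set.Ioo_subset_Icc_self).congr hdeq
  have hv2int : MeasureTheory.IntegrableOn (fun x => v x ^ 2) (Set.Icc 0 1)
      MeasureTheory.volume := ((hv.continuousOn).pow 2).integrableOn_Icc
  have hgint : MeasureTheory.IntegrableOn (fun x => g x ^ 2) (Set.Icc 0 1)
      MeasureTheory.volume := (hgc.pow 2).integrableOn_Icc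
  have hdint : MeasureTheory.IntegrableOn (fun x => (deriv v x) ^ 2) (Set.Icc 0 1)
      MeasureTheory.volume := by
    rw [integrableOn_Icc_iff_integrableOn_Ioo]
    exact (hgint.mono_set Set.Ioo_subset_Icc_self).congr_fun
      (fun x hx => by rw [hdeq hx]) measurableSet_Ioo
  have hder0 : HasDerivWithinAt v (g 0) (Set.Icc 0 1) 0 :=
    (hv.differentiableOn one_ne_zero 0 ⟨le_refl 0, zero_le_one⟩).hasDerivWithinAt
  have hder1 : HasDerivWithinAt v (g 1) (Set.Icc 0 1) 1 :=
    (hv.differentiableOn one_ne_zero 1 ⟨zero_le_one, le_refl 1⟩).hasDerivWithinAt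
  have hL := tendsto_trunc _ hv2int
  have hR0 := tendsto_trunc _ hdint
  have hF0 := tendsto_Faux_zero v (g 0) h0 hder0
  have hF1 := tendsto_Faux_one v (g 1) h1 hder1
  have hR : Filter.Tendsto (fun ε => (1/Real.pi^2) *
        ((∫ x in ε..(1-ε), (deriv v x)^2) + (Faux v ε - Faux v (1-ε))))
      (nhdsWithin 0 (Set.Ioi 0)) (nhds ((1/Real.pi^2) * ∫ x in (0:ℝ)..1, (deriv v x)^2)) := by
    have := (hR0.add (hF0.sub hF1)).const_mul (1/Real.pi^2)
    simpa using this
  apply le_of_tendsto_of_tendsto hL hR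
  filter_upwards [Ioo_mem_nhdsGT_of_mem
    (Set.left_mem_Ico.mpr (by norm_num : (0:ℝ) < 1/2))] with ε hε
  have hk := key_ineq v hd hdc hε
  rw [one_div, inv_mul_eq_div, le_div_iff₀ hπ2]
  linarith [hk]
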